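/- Theorem 3, item 2 (all agents basic): There exists α : N → ℝ such that (Q * S) g h = α h for all g, h ∈ N; moreover every component of α is positive (α h > 0 for all h) and ∑ h, α h = 1. -/

import Mathlib

open Filter Matrix

/-- Theorem 3, item 2 (all agents basic): the rows of `Q * S` are identical,
and the common row `α` has positive components summing to 1. -/
theorem weight_vector_positive_sums_to_one
    (ν : ℕ) (hν : 0 < ν) (m : Fin ν → ℕ) (hm : ∀ i, 1 ≤ m i)
    (P : ∀ i : Fin ν, Matrix (Fin (m i)) (Fin (m i)) ℝ)
    (π : ∀ i : Fin ν, Fin (m i) → ℝ)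
    (R : ∀ i : Fin ν, Matrix (Fin (m i)) (Fin (m i)) ℝ)
    (hPnonneg : ∀ i k l, 0 ≤ P i k l) (hProw : ∀ i k, ∑ l, P i k l = 1)
    (hπpos : ∀ i l, 0 < π i l) (hπsum : ∀ i, ∑ l, π i l = 1)
    (hR : ∀ i k l, R i k l = π i l)
    (hconv : ∀ i, Tendsto (fun k => P i ^ k) atTop (nhds (R i)))
    (Q : Matrix ((i : Fin ν) × Fin (m i)) ((i : Fin ν) × Fin (m i)) ℝ)
    (hQ : Q = Matrix.blockDiagonal' R)
    (S : Matrix ((i : Fin ν) × Fin (m i)) ((i : Fin ν) × Fin (m i)) ℝ)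
    (hSsym : Sᵀ = S) (hSidem : S * S = S)
    (hScol : {v | ∃ x : ((i : Fin ν) × Fin (m i)) → ℝ, S.mulVec x = v} =
      {x | ∃ a : ℝ, ∀ g, Q.mulVec x g = a}) :
    ∃ α : ((i : Fin ν) × Fin (m i)) → ℝ,
      (∀ g h, (Q * S) g h = α h) ∧ (∀ h, 0 < α h) ∧ ∑ h, α h = 1 := by
  classical
  haveI : ∀ i, Nonempty (Fin (m i)) := fun i => ⟨⟨0, hm i⟩⟩
  haveI : Nonempty (Fin ν) := ⟨⟨0, hν⟩⟩
  set s : Fin ν → ℝ := fun j => ∑ l, (π j l) ^ 2 with hs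
  have hspos : ∀ j, 0 < s j := fun j =>
    Finset.sum_pos (fun l _ => pow_pos (hπpos j l) 2) Finset.univ_nonempty
  set C : ℝ := ∑ j, (s j)⁻¹ with hC
  have hCpos : 0 < C :=
    Finset.sum_pos (fun j _ => inv_pos.2 (hspos j)) Finset.univ_nonempty
  set u : ((i : Fin ν) × Fin (m i)) → ℝ := fun f => π f.1 f.2 / s f.1 with hu
  -- `v i` is the i-th row profile of Q
  set v : Fin ν → ((i : Fin ν) × Fin (m i)) → ℝ :=
    fun i f => if f.1 = i then π f.1 f.2 else 0 with hv
  have hQrow : ∀ (i : Fin ν) (k : Fin (m i)) (f : (i : Fin ν) × Fin (m i)),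
      Q ⟨i, k⟩ f = v i f := by
    intro i k f
    rcases f with ⟨j, l⟩
    by_cases h : j = i
    · subst h
      simp only [hQ, Matrix.blockDiagonal'_apply_eq, hR, hv, if_pos rfl]
    · rw [hQ, Matrix.blockDiagonal'_apply_ne R k l (fun h' => h h'.symm)]
      simp [hv, h]
  have hvsum : ∀ (i : Fin ν) (x : ((i : Fin ν) × Fin (m i)) → ℝ),
      ∑ f, v i f * x f = ∑ l, π i l * x ⟨i, l⟩ := by
    intro i x
    rw [← Finset.univ_sigma_univ, Finset.sum_sigma]
    rw [Finset.sum_eq_single i]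
    · simp [hv]
    · intro j _ hj
      apply Finset.sum_eq_zero
      intro l _
      simp [hv, hj]
    · intro h; exact absurd (Finset.mem_univ i) h
  have hQmul : ∀ (x : ((i : Fin ν) × Fin (m i)) → ℝ) (i : Fin ν) (k : Fin (m i)),
      Q.mulVec x ⟨i, k⟩ = ∑ l, π i l * x ⟨i, l⟩ := by
    intro x i k
    calc Q.mulVec x ⟨i, k⟩ = ∑ f, Q ⟨i, k⟩ f * x f := rfl
      _ = ∑ f, v i f * x f := Finset.sum_congr rfl (fun f _ => by rw [hQrow])
      _ = ∑ l, π i l * x ⟨i, l⟩ := hvsum i x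
  -- membership in the range of S gives fixed points of S
  have hfix : ∀ y, (∃ a : ℝ, ∀ g, Q.mulVec y g = a) → S.mulVec y = y := by
    intro y hy
    have : y ∈ {v | ∃ x : ((i : Fin ν) × Fin (m i)) → ℝ, S.mulVec x = v} := by
      rw [hScol]; exact hy
    obtain ⟨x, hx⟩ := this
    rw [← hx, Matrix.mulVec_mulVec, hSidem]
  -- u is in T_P: Q u = 1
  have hQu : ∀ g, Q.mulVec u g = 1 := by
    intro g
    rcases g with ⟨i, k⟩
    rw [hQmul]
    have : ∀ l, π i l * u ⟨i, l⟩ = (π i l) ^ 2 / s i := by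
      intro l
      simp only [hu]
      ring
    rw [Finset.sum_congr rfl fun l _ => this l, ← Finset.sum_div]
    exact div_self (ne_of_gt (hspos i))
  have hSu : S.mulVec u = u := hfix u ⟨1, hQu⟩
  -- inner products with elements of T_P
  have hinner : ∀ y, (∀ g, Q.mulVec y g = Q.mulVec y ⟨⟨0, hν⟩, ⟨0, hm _⟩⟩) → True := fun _ _ => trivial
  -- for y in range of S, the vector z_i := v i - (1/C) • u is orthogonal to y
  have horth : ∀ (y : ((i : Fin ν) × Fin (m i)) → ℝ) (a : ℝ), (∀ g, Q.mulVec y g = a) →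
      ∀ i : Fin ν, ∑ f, (v i f - u f / C) * y f = 0 := by
    intro y a hy i
    have h1 : ∀ j : Fin ν, ∑ l, π j l * y ⟨j, l⟩ = a := by
      intro j
      rw [← hQmul y j ⟨0, hm j⟩]
      exact hy ⟨j, ⟨0, hm j⟩⟩
    have h2 : ∑ f, v i f * y f = a := by rw [hvsum]; exact h1 i
    have h3 : ∑ f, u f * y f = C * a := by
      rw [← Finset.univ_sigma_univ, Finset.sum_sigma]
      have : ∀ j : Fin ν, ∑ l, u ⟨j, l⟩ * y ⟨j, l⟩ = (s j)⁻¹ * a := by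
        intro j
        have : ∀ l, u ⟨j, l⟩ * y ⟨j, l⟩ = (s j)⁻¹ * (π j l * y ⟨j, l⟩) := by
          intro l
          simp only [hu]
          ring
        rw [Finset.sum_congr rfl fun l _ => this l, ← Finset.mul_sum, h1 j]
      rw [Finset.sum_congr rfl fun j _ => this j, ← Finset.sum_mul, ← hC]
    have : ∑ f, (v i f - u f / C) * y f = (∑ f, v i f * y f) - (∑ f, (u f / C) * y f) := by
      rw [← Finset.sum_sub_distrib]
      exact Finset.sum_congr rfl fun f _ => by ring
    rw [this, h2]
    have : ∑ f, (u f / C) * y f = (∑ f, u f * y f) / C := by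
      rw [Finset.sum_div]
      exact Finset.sum_congr rfl fun f _ => by ring
    rw [this, h3]
    field_simp
    ring
  -- S annihilates z_i
  have hSz : ∀ i : Fin ν, S.mulVec (fun f => v i f - u f / C) = 0 := by
    intro i
    set z : ((i : Fin ν) × Fin (m i)) → ℝ := fun f => v i f - u f / C with hz
    set w : ((i : Fin ν) × Fin (m i)) → ℝ := S.mulVec z with hw
    have hwT : ∃ a : ℝ, ∀ g, Q.mulVec w g = a := by
      have : w ∈ {v | ∃ x : ((i : Fin ν) × Fin (m i)) → ℝ, S.mulVec x = v} := ⟨z, rfl⟩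
      rw [hScol] at this
      exact this
    obtain ⟨a, ha⟩ := hwT
    have hzw : ∑ f, z f * w f = 0 := horth w a ha i
    have hww : ∑ f, w f * w f = 0 := by
      have h1 : ∑ f, w f * w f = w ⬝ᵥ w := rfl
      have h2 : w ⬝ᵥ w = z ⬝ᵥ w := by
        calc w ⬝ᵥ w = S.mulVec z ⬝ᵥ S.mulVec z := rfl
          _ = S.mulVec z ᵥ* S ⬝ᵥ z := by rw [Matrix.dotProduct_mulVec]
          _ = Sᵀ.mulVec (S.mulVec z) ⬝ᵥ z := by rw [Matrix.mulVec_transpose]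
          _ = S.mulVec (S.mulVec z) ⬝ᵥ z := by rw [hSsym]
          _ = (S * S).mulVec z ⬝ᵥ z := by rw [Matrix.mulVec_mulVec]
          _ = S.mulVec z ⬝ᵥ z := by rw [hSidem]
          _ = z ⬝ᵥ w := by rw [dotProduct_comm]
          _ = z ⬝ᵥ w := rfl
      have h3 : z ⬝ᵥ w = ∑ f, z f * w f := rfl
      rw [h1, h2, h3, hzw]
    funext f
    have : ∀ g, 0 ≤ w g * w g := fun g => mul_self_nonneg _
    have hzero := (Finset.sum_eq_zero_iff_of_nonneg (fun g _ => this g)).1 hww f (Finset.mem_univ f)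
    simpa [Pi.zero_apply] using mul_self_eq_zero.1 hzero
  -- hence S v_i = (1/C) u
  have hSv : ∀ i : Fin ν, S.mulVec (v i) = fun f => u f / C := by
    intro i
    have hdecomp : v i = (fun f => v i f - u f / C) + fun f => u f / C := by
      funext f; simp
    rw [hdecomp, Matrix.mulVec_add, hSz i, zero_add]
    have : (fun f => u f / C) = C⁻¹ • u := by
      funext f; simp [div_eq_inv_mul, mul_comm]
    rw [this, Matrix.mulVec_smul, hSu]
  refine ⟨fun f => u f / C, ?_, ?_, ?_⟩
  · intro g h
    rcases g with ⟨i, k⟩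
    have : (Q * S) ⟨i, k⟩ h = ∑ f, Q ⟨i, k⟩ f * S f h := rfl
    rw [this]
    have hstep : ∑ f, Q ⟨i, k⟩ f * S f h = ∑ f, S h f * v i f := by
      apply Finset.sum_congr rfl
      intro f _
      have hsf : S f h = S h f := congrFun (congrFun hSsym h) f
      rw [hQrow i k f, hsf, mul_comm]
    rw [hstep]
    have : ∑ f, S h f * v i f = S.mulVec (v i) h := rfl
    rw [this, hSv i]
  · intro h
    exact div_pos (div_pos (hπpos h.1 h.2) (hspos h.1)) hCpos
  · rw [← Finset.univ_sigma_univ, Finset.sum_sigma]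
    have : ∀ j : Fin ν, ∑ l, u ⟨j, l⟩ / C = (s j)⁻¹ / C := by
      intro j
      have : ∀ l : Fin (m j), u ⟨j, l⟩ / C = π j l * ((s j)⁻¹ / C) := by
        intro l
        simp only [hu]
        ring
      rw [Finset.sum_congr rfl fun l _ => this l, ← Finset.sum_mul, hπsum j, one_mul]
    rw [Finset.sum_congr rfl fun j _ => this j, ← Finset.sum_div, ← hC,
      div_self (ne_of_gt hCpos)]
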